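/- arXiv:0806.2491 — 5 statements merged into one kernel-verified Lean document; each statement's English description precedes it below -/
import Mathlib

section
/- Let q, a, b ∈ ℂ with |q| < 1, q ≠ 0, and suppose a q^j ≠ 1 and b q^j ≠ 1 for all integers j ≥ 0. Fix an integer n ≥ 0 and assume additionally a b q^{2n-1} ≠ 1 and a b q^{2n+1} ≠ 1. Define D_n(x) = (q;q)_∞ (x;q)_∞ (b;q)_∞ · (x b q^{n-1};q)_n q^n / ((q;q)_n (x;q)_n (b;q)_n), and define z_m = − a q^m (1 − q^m)(1 − b q^{m-1}) (a b q^m;q)_m (q;q)_∞ (a;q)_∞ (b;q)_∞ / ((1 − a q^m)(1 − a b q^{2m-1}) (q;q)_m (a;q)_m (b;q)_m) for m ∈ {n, n+1}. Then the telescoping identity D_n(a) − (1 − a) D_n(a q) − a q · D_n(a q²) = z_{n+1} − z_n holds. -/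
set_option maxHeartbeats 1000000

/-- The finite q-shifted factorial `(a;q)_n = ∏_{j=0}^{n-1} (1 - a q^j)`. -/
noncomputable def qPoch (q a : ℂ) (n : ℕ) : ℂ := ∏ j ∈ Finset.range n, (1 - a * q ^ j)

/-- The infinite q-shifted factorial `(a;q)_∞ = ∏_{j=0}^{∞} (1 - a q^j)`. -/
noncomputable def qPochInf (q a : ℂ) : ℂ := ∏' j : ℕ, (1 - a * q ^ j)

/-- The summand `D_n(x) = (q,x,b;q)_∞ (x b q^{n-1};q)_n q^n / ((q,x,b;q)_n)`. -/
noncomputable def D₁ (q b : ℂ) (n : ℕ) (x : ℂ) : ℂ :=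
  qPochInf q q * qPochInf q x * qPochInf q b *
    (qPoch q (x * b * q ^ ((n : ℤ) - 1)) n * q ^ n /
      (qPoch q q n * qPoch q x n * qPoch q b n))

/-- The certificate
`z_m = - a q^m (1-q^m)(1-b q^{m-1})(a b q^m;q)_m (q,a,b;q)_∞ / ((1-a q^m)(1-a b q^{2m-1})(q,a,b;q)_m)`. -/
noncomputable def z₁ (q a b : ℂ) (m : ℕ) : ℂ :=
  -(a * q ^ m * (1 - q ^ m) * (1 - b * q ^ ((m : ℤ) - 1)) * qPoch q (a * b * q ^ m) m *
      (qPochInf q q * qPochInf q a * qPochInf q b)) /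
    ((1 - a * q ^ m) * (1 - a * b * q ^ (2 * (m : ℤ) - 1)) *
      (qPoch q q m * qPoch q a m * qPoch q b m))

lemma qPoch_succ' (q x : ℂ) (n : ℕ) :
    qPoch q x (n + 1) = qPoch q x n * (1 - x * q ^ n) := Finset.prod_range_succ _ n

lemma qPoch_shift (q x : ℂ) (n : ℕ) :
    qPoch q (x * q) n * (1 - x) = qPoch q x n * (1 - x * q ^ n) := by
  have h : qPoch q (x * q) n = ∏ j ∈ Finset.range n, (1 - x * q ^ (j + 1)) :=
    Finset.prod_congr rfl fun j _ => by rw [pow_succ]; ring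
  rw [h, ← qPoch_succ']
  unfold qPoch
  rw [Finset.prod_range_succ']
  simp

lemma mult_qp (q x : ℂ) (hq : ‖q‖ < 1) (hx : ∀ j : ℕ, x * q ^ j ≠ 1) :
    Multipliable (fun j : ℕ => 1 - x * q ^ j) := by
  have hsum : Summable (fun j : ℕ => x * q ^ j) :=
    (summable_geometric_of_norm_lt_one (by simpa using hq)).mul_left x
  exact Complex.multipliable_of_summable_log hsum.clog_one_sub

lemma qPochInf_shift (q x : ℂ) (hq : ‖q‖ < 1) (hx : ∀ j : ℕ, x * q ^ j ≠ 1) :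
    qPochInf q x = (1 - x) * qPochInf q (x * q) := by
  have hx' : ∀ j : ℕ, (x * q) * q ^ j ≠ 1 := by
    intro j h
    exact hx (j + 1) (by rw [← h]; ring)
  have hfun : (fun j : ℕ => 1 - x * q ^ (j + 1)) = fun j : ℕ => 1 - (x * q) * q ^ j :=
    funext fun j => by rw [pow_succ]; ring
  have hm : Multipliable (fun j : ℕ => 1 - x * q ^ (j + 1)) := by
    rw [hfun]; exact mult_qp q (x * q) hq hx'
  unfold qPochInf
  rw [tprod_eq_zero_mul' hm]
  congr 1
  · simp
  · rw [hfun]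

/-- Abstract rational-function identity behind the `z_{n+1} = -aq·D_n(aq²)` half. -/
lemma algA (q a b t C1 Qi Ai Bi P A B' : ℂ) (hq0 : q ≠ 0) (hA0 : 1 - a ≠ 0)
    (hAq0 : 1 - a * q ≠ 0) (hP : P ≠ 0) (hA' : A ≠ 0) (hB' : B' ≠ 0)
    (han : 1 - a * t ≠ 0) (han1 : 1 - a * (t * q) ≠ 0) (hbn : 1 - b * t ≠ 0)
    (hqn1 : 1 - t * q ≠ 0) (h2ne : 1 - a * b * (t * t * q) ≠ 0) :
    -(a * (t * q) * (1 - t * q) * (1 - b * t) * (C1 * (1 - a * b * (t * q) * t)) *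
        (Qi * Ai * Bi)) /
      ((1 - a * (t * q)) * (1 - a * b * (t * t * q)) *
        (P * (1 - q * t) * (A * (1 - a * t)) * (B' * (1 - b * t)))) =
    -(a * q * (Qi * (Ai / ((1 - a) * (1 - a * q))) * Bi *
        (C1 * t / (P * (A * (1 - a * t) * (1 - a * q * t) / ((1 - a) * (1 - a * q))) * B')))) := by
  have hqn1' : 1 - q * t ≠ 0 := by rwa [mul_comm]
  have han1' : 1 - a * q * t ≠ 0 := by rw [mul_assoc, mul_comm q t]; exact han1
  simp only [mul_div_assoc', div_div_eq_mul_div, div_div, div_mul_eq_mul_div, neg_div']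
  rw [div_eq_div_iff (by apply_rules [mul_ne_zero]) (by apply_rules [mul_ne_zero])]
  ring

/-- Abstract rational-function identity behind the `D_n(a) - (1-a)D_n(aq) = -z_n` half. -/
lemma algB (q a b t C Qi Ai Bi P A B' : ℂ) (hq0 : q ≠ 0) (hA0 : 1 - a ≠ 0)
    (hP : P ≠ 0) (hA' : A ≠ 0) (hB' : B' ≠ 0) (han : 1 - a * t ≠ 0)
    (h1ne : 1 - a * b * (t * t * q⁻¹) ≠ 0) :
    Qi * Ai * Bi * (C * (1 - a * b * (t * q⁻¹)) / (1 - a * b * (t * t * q⁻¹)) * t / (P * A * B'))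
      - (1 - a) * (Qi * (Ai / (1 - a)) * Bi * (C * t / (P * (A * (1 - a * t) / (1 - a)) * B'))) =
    -(-(a * t * (1 - t) * (1 - b * (t * q⁻¹)) * C * (Qi * Ai * Bi)) /
        ((1 - a * t) * (1 - a * b * (t * t * q⁻¹)) * (P * A * B'))) := by
  simp only [mul_div_assoc', div_div_eq_mul_div, div_div, div_mul_eq_mul_div, neg_div', neg_neg]
  rw [div_sub_div _ _ (by apply_rules [mul_ne_zero]) (by apply_rules [mul_ne_zero]),
    div_eq_div_iff (by apply_rules [mul_ne_zero]) (by apply_rules [mul_ne_zero])]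
  ring

/-- The telescoping identity (2.6):
`D_n(a) - (1-a) D_n(aq) - aq D_n(aq²) = z_{n+1} - z_n`. -/
theorem telescoping_identity_one (q a b : ℂ) (hq : ‖q‖ < 1) (hq0 : q ≠ 0)
    (ha : ∀ j : ℕ, a * q ^ j ≠ 1) (hb : ∀ j : ℕ, b * q ^ j ≠ 1) (n : ℕ)
    (h1 : a * b * q ^ (2 * (n : ℤ) - 1) ≠ 1) (h2 : a * b * q ^ (2 * (n : ℤ) + 1) ≠ 1) :
    D₁ q b n a - (1 - a) * D₁ q b n (a * q) - a * q * D₁ q b n (a * q ^ 2) =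
      z₁ q a b (n + 1) - z₁ q a b n := by
  -- basic nonvanishing facts
  have hne : ∀ (x : ℂ), (∀ j : ℕ, x * q ^ j ≠ 1) → ∀ j : ℕ, (1 : ℂ) - x * q ^ j ≠ 0 :=
    fun x hx j => sub_ne_zero.mpr (Ne.symm (hx j))
  have hqq : ∀ j : ℕ, q * q ^ j ≠ 1 := by
    intro j h
    have h1 : ‖q * q ^ j‖ = 1 := by rw [h]; simp
    have h2 : ‖q * q ^ j‖ ≤ ‖q‖ := by
      rw [norm_mul, norm_pow]
      nlinarith [pow_le_one₀ (norm_nonneg q) hq.le (n := j),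
        norm_nonneg q]
    linarith
  have haq : ∀ j : ℕ, (a * q) * q ^ j ≠ 1 := by
    intro j h
    exact ha (j + 1) (by rw [← h]; ring)
  have hA0 : (1 : ℂ) - a ≠ 0 := by simpa using hne a ha 0
  have hAq0 : (1 : ℂ) - a * q ≠ 0 := by simpa using hne a ha 1
  have hPq : qPoch q q n ≠ 0 :=
    Finset.prod_ne_zero_iff.mpr fun j _ => hne q hqq j
  have hPa : qPoch q a n ≠ 0 :=
    Finset.prod_ne_zero_iff.mpr fun j _ => hne a ha j
  have hPb : qPoch q b n ≠ 0 :=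
    Finset.prod_ne_zero_iff.mpr fun j _ => hne b hb j
  have han : (1 : ℂ) - a * q ^ n ≠ 0 := hne a ha n
  have hbn : (1 : ℂ) - b * q ^ n ≠ 0 := hne b hb n
  -- exponent normalizations
  have he0 : (q : ℂ) ^ ((n : ℤ) - 1) = q ^ n * q⁻¹ := by
    rw [zpow_sub₀ hq0, zpow_one, zpow_natCast, div_eq_mul_inv]
  have he1 : (q : ℂ) ^ (2 * (n : ℤ) - 1) = q ^ n * q ^ n * q⁻¹ := by
    rw [show 2 * (n : ℤ) - 1 = ((n : ℤ) + (n : ℤ)) - 1 by ring, zpow_sub₀ hq0, zpow_one,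
      zpow_add₀ hq0, zpow_natCast, div_eq_mul_inv]
  have h1ne : (1 : ℂ) - a * b * (q ^ n * q ^ n * q⁻¹) ≠ 0 := by
    rw [← he1]; exact sub_ne_zero.mpr (Ne.symm h1)
  have h2ne : (1 : ℂ) - a * b * (q ^ n * q ^ n * q) ≠ 0 := by
    have he2 : a * b * q ^ (2 * (n : ℤ) + 1) = a * b * (q ^ n * q ^ n * q) := by
      rw [show 2 * (n : ℤ) + 1 = ((n : ℤ) + (n : ℤ)) + 1 by ring, zpow_add₀ hq0,
        zpow_add₀ hq0, zpow_one, zpow_natCast]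
    rw [← he2]; exact sub_ne_zero.mpr (Ne.symm h2)
  have hqq1 : (q : ℂ) ^ n * q⁻¹ * q = q ^ n := by
    rw [mul_assoc, inv_mul_cancel₀ hq0, mul_one]
  -- infinite product shifts
  have hA1 : qPochInf q (a * q) = qPochInf q a / (1 - a) := by
    rw [eq_div_iff hA0, qPochInf_shift q a hq ha]; ring
  have hA2 : qPochInf q (a * q ^ 2) = qPochInf q a / ((1 - a) * (1 - a * q)) := by
    have s2 := qPochInf_shift q (a * q) hq haq
    rw [show a * q * q = a * q ^ 2 by ring] at s2
    rw [eq_div_iff (mul_ne_zero hA0 hAq0), qPochInf_shift q a hq ha, s2]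
    ring
  -- finite product shifts
  have hPa1 : qPoch q (a * q) n = qPoch q a n * (1 - a * q ^ n) / (1 - a) := by
    rw [eq_div_iff hA0]; exact qPoch_shift q a n
  have hPa2 : qPoch q (a * q ^ 2) n
      = qPoch q a n * (1 - a * q ^ n) * (1 - a * q * q ^ n) / ((1 - a) * (1 - a * q)) := by
    have s2 := qPoch_shift q (a * q) n
    rw [show a * q * q = a * q ^ 2 by ring] at s2
    rw [eq_div_iff (mul_ne_zero hA0 hAq0)]
    calc qPoch q (a * q ^ 2) n * ((1 - a) * (1 - a * q))
        = (qPoch q (a * q ^ 2) n * (1 - a * q)) * (1 - a) := by ring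
      _ = qPoch q (a * q) n * (1 - a * q * q ^ n) * (1 - a) := by rw [s2]
      _ = (qPoch q (a * q) n * (1 - a)) * (1 - a * q * q ^ n) := by ring
      _ = (qPoch q a n * (1 - a * q ^ n)) * (1 - a * q * q ^ n) := by rw [qPoch_shift q a n]
  have hC0 : qPoch q (a * b * (q ^ n * q⁻¹)) n
      = qPoch q (a * b * q ^ n) n * (1 - a * b * (q ^ n * q⁻¹))
        / (1 - a * b * (q ^ n * q ^ n * q⁻¹)) := by
    have s := qPoch_shift q (a * b * (q ^ n * q⁻¹)) n
    rw [show a * b * (q ^ n * q⁻¹) * q = a * b * q ^ n from by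
          calc a * b * (q ^ n * q⁻¹) * q = a * b * (q ^ n * q⁻¹ * q) := by ring
            _ = a * b * q ^ n := by rw [hqq1]] at s
    rw [eq_div_iff h1ne, show a * b * (q ^ n * q ^ n * q⁻¹) = a * b * (q ^ n * q⁻¹) * q ^ n by ring]
    exact s.symm
  -- the two halves of the telescoping identity
  have hA : z₁ q a b (n + 1) = -(a * q * D₁ q b n (a * q ^ 2)) := by
    have hqn1'' : (1 : ℂ) - q ^ n * q ≠ 0 := by
      have := hne q hqq n; rwa [mul_comm q (q ^ n)] at this
    have han1' : (1 : ℂ) - a * (q ^ n * q) ≠ 0 := by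
      have := hne a ha (n + 1); rwa [pow_succ] at this
    simp only [z₁, D₁]
    push_cast
    rw [show a * q ^ 2 * b * q ^ ((n : ℤ) - 1) = a * b * q ^ (n + 1) from by
          calc a * q ^ 2 * b * q ^ ((n : ℤ) - 1) = a * b * (q ^ n * q⁻¹ * q) * q := by
                rw [he0]; ring
            _ = a * b * q ^ n * q := by rw [hqq1]
            _ = a * b * q ^ (n + 1) := by rw [pow_succ]; ring]
    rw [show (n : ℤ) + 1 - 1 = ((n : ℕ) : ℤ) by push_cast; ring, zpow_natCast]
    rw [show 2 * ((n : ℤ) + 1) - 1 = ((2 * n + 1 : ℕ) : ℤ) by push_cast; ring, zpow_natCast]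
    rw [qPoch_succ' q (a * b * q ^ (n + 1)) n, qPoch_succ' q q n, qPoch_succ' q a n,
      qPoch_succ' q b n, hA2, hPa2]
    rw [show (q : ℂ) ^ (2 * n + 1) = q ^ n * q ^ n * q by ring]
    rw [pow_succ q n]
    linear_combination algA q a b (q ^ n) (qPoch q (a * b * (q ^ n * q)) n) (qPochInf q q)
      (qPochInf q a) (qPochInf q b) (qPoch q q n) (qPoch q a n) (qPoch q b n)
      hq0 hA0 hAq0 hPq hPa hPb han han1' hbn hqn1'' h2ne
  have hB : D₁ q b n a - (1 - a) * D₁ q b n (a * q) = -(z₁ q a b n) := by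
    simp only [z₁, D₁]
    rw [show a * q * b * q ^ ((n : ℤ) - 1) = a * b * q ^ n from by
          calc a * q * b * q ^ ((n : ℤ) - 1) = a * b * (q ^ n * q⁻¹ * q) := by rw [he0]; ring
            _ = a * b * q ^ n := by rw [hqq1]]
    rw [he0, he1, hA1, hPa1, hC0]
    linear_combination algB q a b (q ^ n) (qPoch q (a * b * q ^ n) n) (qPochInf q q)
      (qPochInf q a) (qPochInf q b) (qPoch q q n) (qPoch q a n) (qPoch q b n)
      hq0 hA0 hPq hPa hPb han h1ne
  linear_combination hB - hA
end

section
/- Let q, b ∈ ℂ with |q| < 1, and suppose b q^j ≠ 1 for all integers j ≥ 0. Then ∑_{n=0}^∞ (-1)^n b^n q^{n(n-1)/2} = (q;q)_∞ (b;q)_∞ · ∑_{n=0}^∞ q^n / ((q;q)_n (b;q)_n), where both series converge absolutely. -/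
open Complex Filter Finset Topology

private lemma aux_summable_norm_log {q : ℂ} (hq : ‖q‖ < 1) (x : ℂ) :
    Summable fun j : ℕ => ‖Complex.log (1 - x * q ^ j)‖ := by
  have hq0 : (0:ℝ) ≤ ‖q‖ := norm_nonneg _
  have htend : Tendsto (fun j : ℕ => ‖x‖ * ‖q‖ ^ j) atTop (𝓝 0) := by
    simpa using (tendsto_pow_atTop_nhds_zero_of_lt_one hq0 hq).const_mul (‖x‖)
  obtain ⟨N, hN⟩ := eventually_atTop.mp
    (htend.eventually (eventually_le_nhds (by norm_num : (0:ℝ) < 1/2)))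
  rw [← summable_nat_add_iff N]
  have hgeo : Summable (fun j : ℕ =>
      3/2 * (‖x‖ * ‖q‖ ^ N) * ‖q‖ ^ j) :=
    (summable_geometric_of_lt_one hq0 hq).mul_left _
  refine Summable.of_nonneg_of_le (fun j => norm_nonneg _) (fun j => ?_) hgeo
  have h1 : ‖-(x * q ^ (j + N))‖ ≤ 1/2 := by
    rw [norm_neg, norm_mul, norm_pow]
    exact hN (j + N) (Nat.le_add_left N j)
  have h2 : (1 : ℂ) - x * q ^ (j + N) = 1 + -(x * q ^ (j + N)) := by ring
  rw [h2]
  calc ‖Complex.log (1 + -(x * q ^ (j + N)))‖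
      ≤ 3/2 * ‖-(x * q ^ (j + N))‖ := Complex.norm_log_one_add_half_le_self h1
    _ = 3/2 * (‖x‖ * ‖q‖ ^ (j + N)) := by
        rw [norm_neg, norm_mul, norm_pow]
    _ = 3/2 * (‖x‖ * ‖q‖ ^ N) * ‖q‖ ^ j := by
        rw [pow_add]; ring

private lemma aux_log_summable {q : ℂ} (hq : ‖q‖ < 1) (x : ℂ) :
    Summable fun j : ℕ => Complex.log (1 - x * q ^ j) :=
  (aux_summable_norm_log hq x).of_norm

private lemma aux_exp_formula {q : ℂ} (hq : ‖q‖ < 1) (x : ℂ)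
    (hx : ∀ j : ℕ, (1 : ℂ) - x * q ^ j ≠ 0) :
    qPochInf q x = Complex.exp (∑' j : ℕ, Complex.log (1 - x * q ^ j)) := by
  have h := Complex.cexp_tsum_eq_tprod (f := fun (j : ℕ) => 1 - x * q ^ j)
    hx (aux_log_summable hq x)
  exact h.symm

private lemma aux_ne_zero {q : ℂ} (hq : ‖q‖ < 1) (x : ℂ)
    (hx : ∀ j : ℕ, (1 : ℂ) - x * q ^ j ≠ 0) : qPochInf q x ≠ 0 := by
  rw [aux_exp_formula hq x hx]; exact Complex.exp_ne_zero _

private lemma aux_multipliable {q : ℂ} (hq : ‖q‖ < 1) (x : ℂ)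
    (hx : ∀ j : ℕ, (1 : ℂ) - x * q ^ j ≠ 0) :
    Multipliable fun j : ℕ => 1 - x * q ^ j :=
  Complex.multipliable_of_summable_log (f := fun (j : ℕ) => 1 - x * q ^ j)
    (aux_log_summable hq x)

private lemma aux_norm_le {q : ℂ} (hq : ‖q‖ < 1) (x : ℂ)
    (hx : ∀ j : ℕ, (1 : ℂ) - x * q ^ j ≠ 0) :
    ‖qPochInf q x‖ ≤
      Real.exp (∑' j : ℕ, ‖Complex.log (1 - x * q ^ j)‖) := by
  rw [aux_exp_formula hq x hx, Complex.norm_exp]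
  apply Real.exp_le_exp.2
  refine le_trans (Complex.re_le_norm _) ?_
  exact norm_tsum_le_tsum_norm (aux_summable_norm_log hq x)

private lemma aux_L_shift {q : ℂ} (hq : ‖q‖ < 1) (x : ℂ) (n : ℕ) :
    (∑' j : ℕ, ‖Complex.log (1 - x * q ^ n * q ^ j)‖) ≤
      ∑' j : ℕ, ‖Complex.log (1 - x * q ^ j)‖ := by
  have hs := aux_summable_norm_log hq x
  have hrw : (fun j : ℕ => ‖Complex.log (1 - x * q ^ n * q ^ j)‖)
      = fun j : ℕ => ‖Complex.log (1 - x * q ^ (j + n))‖ := by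
    funext j; rw [mul_assoc, ← pow_add, add_comm n j]
  rw [hrw]
  have hsplit := Summable.sum_add_tsum_nat_add
    (f := fun j : ℕ => ‖Complex.log (1 - x * q ^ j)‖) n hs
  have hhead : (0:ℝ) ≤ ∑ i ∈ range n, ‖Complex.log (1 - x * q ^ i)‖ :=
    Finset.sum_nonneg fun i _ => norm_nonneg _
  linarith [hsplit]

private lemma aux_q_ne {q : ℂ} (hq : ‖q‖ < 1) :
    ∀ j : ℕ, (1 : ℂ) - q * q ^ j ≠ 0 := by
  have hq0 : (0:ℝ) ≤ ‖q‖ := norm_nonneg _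
  intro j h
  have h1 : q * q ^ j = 1 := by linear_combination -h
  have h2 : ‖q * q ^ j‖ < 1 := by
    rw [norm_mul, norm_pow]
    calc ‖q‖ * ‖q‖ ^ j ≤ ‖q‖ * 1 :=
          mul_le_mul_of_nonneg_left (pow_le_one₀ hq0 (le_of_lt hq)) hq0
      _ = ‖q‖ := mul_one _
      _ < 1 := hq
  rw [h1] at h2; simp at h2

private lemma aux_shift_ne {q x : ℂ} (hx : ∀ j : ℕ, (1:ℂ) - x * q ^ j ≠ 0) (n : ℕ) :
    ∀ j : ℕ, (1:ℂ) - x * q ^ n * q ^ j ≠ 0 := by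
  intro j; rw [mul_assoc, ← pow_add]; exact hx (n + j)

private lemma aux_step {q : ℂ} (hq : ‖q‖ < 1) (y : ℂ)
    (hy : ∀ j : ℕ, (1:ℂ) - y * q ^ j ≠ 0) :
    qPochInf q y = (1 - y) * qPochInf q (y * q) := by
  have hyq : ∀ j : ℕ, (1:ℂ) - y * q * q ^ j ≠ 0 := by
    intro j
    have h := hy (1 + j)
    rw [pow_add, pow_one, ← mul_assoc] at h
    exact h
  have h1 : ∀ b : ℕ, (1:ℂ) - y * q * q ^ b = 1 - y * q ^ (b + 1) := by
    intro b; rw [pow_succ]; ring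
  have hm : Multipliable fun n : ℕ => (1:ℂ) - y * q ^ (n + 1) :=
    (aux_multipliable hq (y * q) hyq).congr h1
  have h0 := tprod_eq_zero_mul' (f := fun j : ℕ => (1:ℂ) - y * q ^ j) hm
  simp only [pow_zero, mul_one] at h0
  have h2 : (fun b : ℕ => (1:ℂ) - y * q ^ (b + 1)) = fun b : ℕ => 1 - y * q * q ^ b := by
    funext b; rw [pow_succ]; ring
  rw [h2] at h0
  simp only [qPochInf]
  exact h0

private lemma aux_split {q : ℂ} (hq : ‖q‖ < 1) (x : ℂ)
    (hx : ∀ j : ℕ, (1:ℂ) - x * q ^ j ≠ 0) (n : ℕ) :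
    qPochInf q x = qPoch q x n * qPochInf q (x * q ^ n) := by
  induction n with
  | zero => simp [qPoch]
  | succ n ih =>
      rw [ih, aux_step hq (x * q ^ n) (aux_shift_ne hx n)]
      have h1 : x * q ^ n * q = x * q ^ (n + 1) := by rw [pow_succ]; ring
      rw [h1]
      simp only [qPoch]
      rw [Finset.prod_range_succ]
      ring

private lemma aux_tendsto_one {q : ℂ} (hq : ‖q‖ < 1) (x : ℂ)
    (hx : ∀ j : ℕ, (1:ℂ) - x * q ^ j ≠ 0) :
    Tendsto (fun n : ℕ => qPochInf q (x * q ^ n)) atTop (𝓝 1) := by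
  have htail : Tendsto (fun n : ℕ => ∑' j : ℕ, Complex.log (1 - x * q ^ (j + n)))
      atTop (𝓝 0) := tendsto_sum_nat_add (fun j : ℕ => Complex.log (1 - x * q ^ j))
  have heq : (fun n : ℕ => qPochInf q (x * q ^ n))
      = fun n : ℕ => Complex.exp (∑' j : ℕ, Complex.log (1 - x * q ^ (j + n))) := by
    funext n
    rw [aux_exp_formula hq (x * q ^ n) (aux_shift_ne hx n)]
    congr 1
    exact tsum_congr fun j => by rw [mul_assoc, ← pow_add, add_comm n j]
  rw [heq]
  have h2 := (Complex.continuous_exp.tendsto 0).comp htail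
  simpa [Function.comp_def] using h2

private lemma aux_term_le {q : ℂ} (hq : ‖q‖ < 1) (x : ℂ)
    (hx : ∀ j : ℕ, (1:ℂ) - x * q ^ j ≠ 0) (n : ℕ) :
    ‖q ^ n * (qPochInf q (q * q ^ n) * qPochInf q (x * q ^ n))‖ ≤
      ‖q‖ ^ n * (Real.exp (∑' j:ℕ, ‖Complex.log (1 - q * q ^ j)‖)
        * Real.exp (∑' j:ℕ, ‖Complex.log (1 - x * q ^ j)‖)) := by
  have hq0 : (0:ℝ) ≤ ‖q‖ := norm_nonneg _
  have hq1 := aux_q_ne hq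
  have h1 : ‖qPochInf q (q * q ^ n)‖
      ≤ Real.exp (∑' j:ℕ, ‖Complex.log (1 - q * q ^ j)‖) :=
    le_trans (aux_norm_le hq (q * q ^ n) (aux_shift_ne hq1 n))
      (Real.exp_le_exp.2 (aux_L_shift hq q n))
  have h2 : ‖qPochInf q (x * q ^ n)‖
      ≤ Real.exp (∑' j:ℕ, ‖Complex.log (1 - x * q ^ j)‖) :=
    le_trans (aux_norm_le hq (x * q ^ n) (aux_shift_ne hx n))
      (Real.exp_le_exp.2 (aux_L_shift hq x n))
  rw [norm_mul, norm_mul, norm_pow]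
  exact mul_le_mul_of_nonneg_left
    (mul_le_mul h1 h2 (norm_nonneg _) (Real.exp_nonneg _))
    (pow_nonneg hq0 n)

private lemma aux_gsummable {q : ℂ} (hq : ‖q‖ < 1) (x : ℂ)
    (hx : ∀ j : ℕ, (1:ℂ) - x * q ^ j ≠ 0) :
    Summable fun n : ℕ => q ^ n * (qPochInf q (q * q ^ n) * qPochInf q (x * q ^ n)) := by
  have hq0 : (0:ℝ) ≤ ‖q‖ := norm_nonneg _
  exact Summable.of_norm_bounded
    ((summable_geometric_of_lt_one hq0 hq).mul_right _) (aux_term_le hq x hx)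

private lemma aux_gbound {q : ℂ} (hq : ‖q‖ < 1) (x : ℂ)
    (hx : ∀ j : ℕ, (1:ℂ) - x * q ^ j ≠ 0) :
    ‖∑' n : ℕ, q ^ n * (qPochInf q (q * q ^ n) * qPochInf q (x * q ^ n))‖ ≤
      (1 - ‖q‖)⁻¹ * (Real.exp (∑' j:ℕ, ‖Complex.log (1 - q * q ^ j)‖)
        * Real.exp (∑' j:ℕ, ‖Complex.log (1 - x * q ^ j)‖)) := by
  have hq0 : (0:ℝ) ≤ ‖q‖ := norm_nonneg _
  have hgeo : Summable (fun n : ℕ => ‖q‖ ^ n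
      * (Real.exp (∑' j:ℕ, ‖Complex.log (1 - q * q ^ j)‖)
        * Real.exp (∑' j:ℕ, ‖Complex.log (1 - x * q ^ j)‖))) :=
    (summable_geometric_of_lt_one hq0 hq).mul_right _
  have hsn : Summable (fun n : ℕ =>
      ‖q ^ n * (qPochInf q (q * q ^ n) * qPochInf q (x * q ^ n))‖) :=
    Summable.of_nonneg_of_le (fun n => norm_nonneg _) (aux_term_le hq x hx) hgeo
  refine le_trans (norm_tsum_le_tsum_norm hsn) ?_
  refine le_trans (Summable.tsum_le_tsum (aux_term_le hq x hx) hsn hgeo) ?_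
  rw [tsum_mul_right, tsum_geometric_of_lt_one hq0 hq]

private lemma aux_funceq {q : ℂ} (hq : ‖q‖ < 1) (x : ℂ)
    (hx : ∀ j : ℕ, (1 : ℂ) - x * q ^ j ≠ 0) :
    ∑' n : ℕ, q ^ n * (qPochInf q (q * q ^ n) * qPochInf q (x * q ^ n)) =
      1 - x * ∑' n : ℕ, q ^ n * (qPochInf q (q * q ^ n) * qPochInf q (x * q * q ^ n)) := by
  have hq1 := aux_q_ne hq
  have hxq : ∀ j : ℕ, (1 : ℂ) - x * q * q ^ j ≠ 0 := by
    intro j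
    have h := hx (1 + j)
    rw [pow_add, pow_one, ← mul_assoc] at h
    exact h
  have hu : Summable (fun n : ℕ =>
      q ^ n * (qPochInf q (q * q ^ n) * qPochInf q (x * q ^ n))) := aux_gsummable hq x hx
  have hv : Summable (fun n : ℕ =>
      q ^ n * (qPochInf q (q * q ^ n) * qPochInf q (x * q * q ^ n))) := aux_gsummable hq (x * q) hxq
  have e1 : ∀ n : ℕ, qPochInf q (q * q ^ n)
      = (1 - q * q ^ n) * qPochInf q (q * q ^ (n+1)) := by
    intro n
    rw [aux_step hq (q * q ^ n) (aux_shift_ne hq1 n)]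
    congr 2
    rw [pow_succ]; ring
  have e2 : ∀ n : ℕ, qPochInf q (x * q ^ n)
      = (1 - x * q ^ n) * qPochInf q (x * q ^ (n+1)) := by
    intro n
    rw [aux_step hq (x * q ^ n) (aux_shift_ne hx n)]
    congr 2
    rw [pow_succ]; ring
  have e3 : ∀ n : ℕ, qPochInf q (x * q * q ^ n) = qPochInf q (x * q ^ (n+1)) := by
    intro n; congr 1; rw [pow_succ]; ring
  have key : ∀ n : ℕ,
      q ^ (n+1) * (qPochInf q (q * q ^ (n+1)) * qPochInf q (x * q ^ (n+1)))
        + x * (q ^ n * (qPochInf q (q * q ^ n) * qPochInf q (x * q * q ^ n)))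
      = (qPochInf q (q * q ^ (n+1)) * qPochInf q (x * q ^ (n+1)))
        - (qPochInf q (q * q ^ n) * qPochInf q (x * q ^ n)) := by
    intro n
    rw [e3 n, e1 n, e2 n]
    ring
  have hA : Summable (fun n : ℕ =>
      q ^ (n+1) * (qPochInf q (q * q ^ (n+1)) * qPochInf q (x * q ^ (n+1)))) :=
    (summable_nat_add_iff 1).2 hu
  have hB : Summable (fun n : ℕ =>
      x * (q ^ n * (qPochInf q (q * q ^ n) * qPochInf q (x * q * q ^ n)))) := hv.mul_left x
  have hd : Summable (fun n : ℕ =>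
      (qPochInf q (q * q ^ (n+1)) * qPochInf q (x * q ^ (n+1)))
        - (qPochInf q (q * q ^ n) * qPochInf q (x * q ^ n))) := (hA.add hB).congr key
  have hSlim : Tendsto (fun n : ℕ => qPochInf q (q * q ^ n) * qPochInf q (x * q ^ n))
      atTop (𝓝 1) := by
    have h := (aux_tendsto_one hq q hq1).mul (aux_tendsto_one hq x hx)
    simpa using h
  have htel : (fun n : ℕ => ∑ i ∈ range n,
      ((qPochInf q (q * q ^ (i+1)) * qPochInf q (x * q ^ (i+1)))
        - (qPochInf q (q * q ^ i) * qPochInf q (x * q ^ i))))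
      = fun n : ℕ => qPochInf q (q * q ^ n) * qPochInf q (x * q ^ n)
        - qPochInf q (q * q ^ 0) * qPochInf q (x * q ^ 0) := by
    funext n
    exact Finset.sum_range_sub (fun i => qPochInf q (q * q ^ i) * qPochInf q (x * q ^ i)) n
  have hdsum : (∑' n : ℕ,
      ((qPochInf q (q * q ^ (n+1)) * qPochInf q (x * q ^ (n+1)))
        - (qPochInf q (q * q ^ n) * qPochInf q (x * q ^ n))))
      = 1 - qPochInf q (q * q ^ 0) * qPochInf q (x * q ^ 0) := by
    have h3 := hd.hasSum.tendsto_sum_nat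
    rw [htel] at h3
    exact tendsto_nhds_unique h3 (hSlim.sub_const _)
  have h6 := Summable.tsum_eq_zero_add hu
  have h7 := Summable.tsum_add hA hB
  have h8 := tsum_congr (L := SummationFilter.unconditional ℕ) key
  have h9 : (∑' n : ℕ, x * (q ^ n * (qPochInf q (q * q ^ n) * qPochInf q (x * q * q ^ n))))
      = x * ∑' n : ℕ, q ^ n * (qPochInf q (q * q ^ n) * qPochInf q (x * q * q ^ n)) :=
    tsum_mul_left
  linear_combination h6 - h7 + h8 + hdsum - h9

/-- Identity (2.9): `∑ (-1)^n b^n q^{n(n-1)/2} = (q,b;q)_∞ ∑ q^n/((q,b;q)_n)`,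
both series converging absolutely. -/
theorem heine_limit_case (q b : ℂ) (hq : ‖q‖ < 1)
    (hb : ∀ j : ℕ, b * q ^ j ≠ 1) :
    Summable (fun n : ℕ => (-1 : ℂ) ^ n * b ^ n * q ^ (n * (n - 1) / 2)) ∧
    Summable (fun n : ℕ => q ^ n / (qPoch q q n * qPoch q b n)) ∧
    ∑' n : ℕ, (-1 : ℂ) ^ n * b ^ n * q ^ (n * (n - 1) / 2) =
      qPochInf q q * qPochInf q b * ∑' n : ℕ, q ^ n / (qPoch q q n * qPoch q b n) := by
  have hq0 : (0:ℝ) ≤ ‖q‖ := norm_nonneg _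
  have hb0 : (0:ℝ) ≤ ‖b‖ := norm_nonneg _
  have hq1 := aux_q_ne hq
  have hb' : ∀ j : ℕ, (1 : ℂ) - b * q ^ j ≠ 0 := by
    intro j h; exact hb j (by linear_combination -h)
  -- summability of the theta series
  have htb : Tendsto (fun n : ℕ => ‖b‖ * ‖q‖ ^ n) atTop (𝓝 0) := by
    simpa using (tendsto_pow_atTop_nhds_zero_of_lt_one hq0 hq).const_mul (‖b‖)
  obtain ⟨N₀, hN₀⟩ := eventually_atTop.mp
    (htb.eventually (eventually_le_nhds (by norm_num : (0:ℝ) < 1/2)))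
  have hfnorm : ∀ n : ℕ, ‖(-1 : ℂ) ^ n * b ^ n * q ^ (n * (n - 1) / 2)‖
      = ‖b‖ ^ n * ‖q‖ ^ (n * (n - 1) / 2) := by
    intro n
    rw [norm_mul, norm_mul, norm_pow, norm_pow, norm_pow]
    simp
  have hfs : Summable (fun n : ℕ => (-1:ℂ)^n * b^n * q^(n*(n-1)/2)) := by
    apply Summable.of_norm_bounded_eventually_nat (g := fun n => (1/2 : ℝ) ^ n)
      (summable_geometric_of_lt_one (by norm_num) (by norm_num))
    filter_upwards [eventually_ge_atTop (2*N₀+1)] with n hn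
    rw [hfnorm]
    have h1 : n * N₀ ≤ n * (n-1) / 2 := by
      have h2 : n * (2*N₀) ≤ n * (n-1) := Nat.mul_le_mul_left n (by omega)
      have h3 : n * (2*N₀) / 2 = n * N₀ := by
        rw [show n * (2*N₀) = 2 * (n * N₀) by ring]
        exact Nat.mul_div_cancel_left _ (by norm_num)
      calc n * N₀ = n * (2*N₀) / 2 := h3.symm
        _ ≤ n * (n-1) / 2 := Nat.div_le_div_right h2
    have h4 : ‖q‖ ^ (n*(n-1)/2) ≤ ‖q‖ ^ (n * N₀) :=
      pow_le_pow_of_le_one hq0 (le_of_lt hq) h1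
    have h5 : ‖b‖ ^ n * ‖q‖ ^ (n * N₀)
        = (‖b‖ * ‖q‖ ^ N₀) ^ n := by
      rw [mul_pow, ← pow_mul, mul_comm N₀ n]
    calc ‖b‖ ^ n * ‖q‖ ^ (n*(n-1)/2)
        ≤ ‖b‖ ^ n * ‖q‖ ^ (n*N₀) :=
          mul_le_mul_of_nonneg_left h4 (pow_nonneg hb0 n)
      _ = (‖b‖ * ‖q‖ ^ N₀) ^ n := h5
      _ ≤ (1/2:ℝ) ^ n :=
          pow_le_pow_left₀ (mul_nonneg hb0 (pow_nonneg hq0 N₀)) (hN₀ N₀ le_rfl) n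
  -- iteration of the functional equation
  have hiter : ∀ N : ℕ,
      (∑' n : ℕ, q ^ n * (qPochInf q (q * q ^ n) * qPochInf q (b * q ^ n)))
        = (∑ k ∈ range N, (-1:ℂ)^k * b^k * q^(k*(k-1)/2))
          + (-1:ℂ)^N * b^N * q^(N*(N-1)/2)
            * ∑' n : ℕ, q ^ n * (qPochInf q (q * q ^ n) * qPochInf q (b * q ^ N * q ^ n)) := by
    intro N
    induction N with
    | zero => simp
    | succ N ih =>
        have hfe := aux_funceq hq (b * q ^ N) (aux_shift_ne hb' N)
        have hre : (∑' n : ℕ, q ^ n * (qPochInf q (q * q ^ n)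
              * qPochInf q (b * q ^ N * q * q ^ n)))
            = ∑' n : ℕ, q ^ n * (qPochInf q (q * q ^ n)
              * qPochInf q (b * q ^ (N+1) * q ^ n)) := by
          refine tsum_congr fun n => ?_
          congr 3
          rw [pow_succ]; ring
        rw [hre] at hfe
        rw [ih, hfe, Finset.sum_range_succ]
        have hT : (N+1) * ((N+1) - 1) / 2 = N * (N-1)/2 + N := by
          rw [← Finset.sum_range_id, ← Finset.sum_range_id, Finset.sum_range_succ]
        rw [hT, pow_add]
        ring
  -- uniform bound on the remainders
  have hM : ∀ N : ℕ, ‖∑' n : ℕ, q ^ n * (qPochInf q (q * q ^ n)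
        * qPochInf q (b * q ^ N * q ^ n))‖
      ≤ (1 - ‖q‖)⁻¹ * (Real.exp (∑' j:ℕ, ‖Complex.log (1 - q * q ^ j)‖)
        * Real.exp (∑' j:ℕ, ‖Complex.log (1 - b * q ^ j)‖)) := by
    intro N
    refine le_trans (aux_gbound hq (b * q ^ N) (aux_shift_ne hb' N)) ?_
    refine mul_le_mul_of_nonneg_left
      (mul_le_mul_of_nonneg_left (Real.exp_le_exp.2 (aux_L_shift hq b N))
        (Real.exp_nonneg _))
      (inv_nonneg.2 (by linarith))
  have hrem : Tendsto (fun N : ℕ => (-1:ℂ)^N * b^N * q^(N*(N-1)/2)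
      * ∑' n : ℕ, q ^ n * (qPochInf q (q * q ^ n) * qPochInf q (b * q ^ N * q ^ n)))
      atTop (𝓝 0) := by
    rw [tendsto_zero_iff_norm_tendsto_zero]
    have hf0 : Tendsto (fun N : ℕ => ‖(-1:ℂ)^N * b^N * q^(N*(N-1)/2)‖) atTop (𝓝 0) :=
      tendsto_zero_iff_norm_tendsto_zero.mp hfs.tendsto_atTop_zero
    refine squeeze_zero (g := fun N : ℕ => ‖(-1:ℂ)^N * b^N * q^(N*(N-1)/2)‖
        * ((1 - ‖q‖)⁻¹ * (Real.exp (∑' j:ℕ, ‖Complex.log (1 - q * q ^ j)‖)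
          * Real.exp (∑' j:ℕ, ‖Complex.log (1 - b * q ^ j)‖))))
      (fun N => norm_nonneg _) (fun N => ?_) ?_
    · rw [norm_mul]
      exact mul_le_mul_of_nonneg_left (hM N)
        (norm_nonneg _)
    · simpa using hf0.mul_const _
  have hGb : Tendsto (fun N : ℕ => ∑ k ∈ range N, (-1:ℂ)^k * b^k * q^(k*(k-1)/2)) atTop
      (𝓝 (∑' n : ℕ, q ^ n * (qPochInf q (q * q ^ n) * qPochInf q (b * q ^ n)))) := by
    have heq : (fun N : ℕ => ∑ k ∈ range N, (-1:ℂ)^k * b^k * q^(k*(k-1)/2))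
        = fun N : ℕ => (∑' n : ℕ, q ^ n * (qPochInf q (q * q ^ n) * qPochInf q (b * q ^ n)))
            - ((-1:ℂ)^N * b^N * q^(N*(N-1)/2)
              * ∑' n : ℕ, q ^ n * (qPochInf q (q * q ^ n) * qPochInf q (b * q ^ N * q ^ n))) := by
      funext N
      linear_combination -hiter N
    rw [heq]
    simpa using tendsto_const_nhds.sub hrem
  have hfG : (∑' n:ℕ, (-1:ℂ)^n * b^n * q^(n*(n-1)/2))
      = ∑' n : ℕ, q ^ n * (qPochInf q (q * q ^ n) * qPochInf q (b * q ^ n)) :=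
    tendsto_nhds_unique hfs.hasSum.tendsto_sum_nat hGb
  -- relating to the stated right-hand side
  have hPqne : ∀ n : ℕ, qPoch q q n ≠ 0 := by
    intro n; rw [qPoch]; exact Finset.prod_ne_zero_iff.2 fun j _ => hq1 j
  have hPbne : ∀ n : ℕ, qPoch q b n ≠ 0 := by
    intro n; rw [qPoch]; exact Finset.prod_ne_zero_iff.2 fun j _ => hb' j
  have hCterm : ∀ n : ℕ, qPochInf q q * qPochInf q b * (q ^ n / (qPoch q q n * qPoch q b n))
      = q ^ n * (qPochInf q (q * q ^ n) * qPochInf q (b * q ^ n)) := by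
    intro n
    rw [aux_split hq q hq1 n, aux_split hq b hb' n]
    field_simp [hPqne n, hPbne n]
  have hCne : qPochInf q q * qPochInf q b ≠ 0 :=
    mul_ne_zero (aux_ne_zero hq q hq1) (aux_ne_zero hq b hb')
  have hsum2 : Summable (fun n : ℕ => q ^ n / (qPoch q q n * qPoch q b n)) := by
    have h := (aux_gsummable hq b hb').mul_left (qPochInf q q * qPochInf q b)⁻¹
    refine h.congr fun n => ?_
    rw [← hCterm n, inv_mul_cancel_left₀ hCne]
  refine ⟨hfs, hsum2, ?_⟩
  rw [hfG, ← tsum_mul_left]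
  exact tsum_congr fun n => (hCterm n).symm
end

section
/- Let q, a ∈ ℂ with |q| < 1. Define a sequence (A_n)_{n≥0} of complex numbers by A_0 = 1 − a, A_1 = (1 − a)(1 − a q) + a q, and A_{n+1} = (1 − a q^{n+1}) A_n + a q^{n+1} A_{n-1} for n ≥ 1. Then for every n ≥ 0 one has A_{n+1} − A_n = (−1)^n a^n q^{n(n+3)/2} (A_1 − A_0), and consequently the sequence (A_n) converges (to a finite limit in ℂ). -/
/-- The difference formula and convergence for the coefficient sequence `A_n`
arising from iterating `H(a) = (1-a) H(aq) + aq H(aq²)`. -/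
theorem A_seq_converges (q a : ℂ) (hq : ‖q‖ < 1) (A : ℕ → ℂ)
    (hA0 : A 0 = 1 - a) (hA1 : A 1 = (1 - a) * (1 - a * q) + a * q)
    (hrec : ∀ n : ℕ, 1 ≤ n →
      A (n + 1) = (1 - a * q ^ (n + 1)) * A n + a * q ^ (n + 1) * A (n - 1)) :
    (∀ n : ℕ, A (n + 1) - A n =
      (-1 : ℂ) ^ n * a ^ n * q ^ (n * (n + 3) / 2) * (A 1 - A 0)) ∧
    ∃ L : ℂ, Filter.Tendsto A Filter.atTop (nhds L) := by
  set f : ℕ → ℂ := fun n => A (n + 1) - A n with hf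
  have hstep : ∀ n : ℕ, f (n + 1) = -(a * q ^ (n + 2)) * f n := by
    intro n
    have hr := hrec (n + 1) (by omega)
    simp only [Nat.add_sub_cancel] at hr
    simp only [hf]
    rw [show n + 1 + 1 = n + 2 from rfl, hr]
    ring
  have key : ∀ n : ℕ, A (n + 1) - A n =
      (-1 : ℂ) ^ n * a ^ n * q ^ (n * (n + 3) / 2) * (A 1 - A 0) := by
    intro n
    induction n with
    | zero => simp
    | succ n ih =>
      have hexp : (n + 1) * ((n + 1) + 3) / 2 = n * (n + 3) / 2 + (n + 2) := by
        have h2 : (n + 1) * ((n + 1) + 3) = n * (n + 3) + (n + 2) * 2 := by ring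
        rw [h2, Nat.add_mul_div_right _ _ (by norm_num)]
      have := hstep n
      simp only [hf] at this
      rw [show n + 1 + 1 = n + 2 from rfl] at *
      rw [this, ih, hexp, pow_add, pow_succ, pow_succ]
      ring
  refine ⟨key, ?_⟩
  -- summability of f
  have hnorm : ∀ n : ℕ, ‖f (n + 1)‖ = (‖a‖ * ‖q‖ ^ (n + 2)) * ‖f n‖ := by
    intro n
    rw [hstep n]
    simp [norm_mul, norm_pow, mul_assoc]
  have htend : Filter.Tendsto (fun n : ℕ => ‖a‖ * ‖q‖ ^ (n + 2))
      Filter.atTop (nhds 0) := by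
    have hq' : ‖q‖ < 1 := by exact hq
    have h0 : Filter.Tendsto (fun n : ℕ => ‖q‖ ^ (n + 2)) Filter.atTop (nhds 0) :=
      (tendsto_pow_atTop_nhds_zero_of_norm_lt_one (by simpa using hq')).comp
        (Filter.tendsto_add_atTop_nat 2)
    simpa using h0.const_mul ‖a‖
  have hev : ∀ᶠ n in Filter.atTop, ‖f (n + 1)‖ ≤ (1 / 2 : ℝ) * ‖f n‖ := by
    filter_upwards [htend.eventually_le_const (by norm_num : (0:ℝ) < 1/2)] with n hn
    rw [hnorm n]
    exact mul_le_mul_of_nonneg_right hn (norm_nonneg _)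
  have hsum : Summable f :=
    summable_of_ratio_norm_eventually_le (by norm_num) hev
  have hpart : Filter.Tendsto (fun n => ∑ i ∈ Finset.range n, f i)
      Filter.atTop (nhds (∑' n, f n)) := hsum.hasSum.tendsto_sum_nat
  have hAeq : ∀ n : ℕ, A n = A 0 + ∑ i ∈ Finset.range n, f i := by
    intro n
    rw [Finset.sum_range_sub (fun i => A i)]
    ring
  refine ⟨A 0 + ∑' n, f n, ?_⟩
  have : Filter.Tendsto (fun n => A 0 + ∑ i ∈ Finset.range n, f i)
      Filter.atTop (nhds (A 0 + ∑' n, f n)) := hpart.const_add (A 0)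
  exact this.congr (fun n => (hAeq n).symm)
end

section
/- Let q, a, b ∈ ℂ with |q| < 1, and define f(a) = 1 + ∑_{n=1}^∞ (-1)^n q^{n(n-1)/2} (a^n + b^n) (an absolutely convergent series). Then (1 + a q)·f(a) − (1 − a² q)·f(a q) − (a q + a² q)·f(a q²) = (q − 1)·a. -/
open Filter

/-- `f(a) = 1 + ∑_{n=1}^∞ (-1)^n q^{n(n-1)/2} (a^n + b^n)` (with `b` held fixed). -/
noncomputable def f₂ (q b a : ℂ) : ℂ :=
  1 + ∑' n : ℕ, (-1 : ℂ) ^ (n + 1) * q ^ ((n + 1) * n / 2) * (a ^ (n + 1) + b ^ (n + 1))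

/-- Triangle-number exponent step. -/
lemma Texp1 (n : ℕ) : (n + 1 + 1) * (n + 1) / 2 = (n + 1) * n / 2 + (n + 1) := by
  have h : (n + 1 + 1) * (n + 1) = (n + 1) * n + (n + 1) * 2 := by ring
  rw [h, Nat.add_mul_div_right _ _ (by norm_num : (0:ℕ) < 2)]

lemma Texp2 (n : ℕ) : (n + 2 + 1) * (n + 2) / 2 = (n + 1) * n / 2 + (2 * n + 3) := by
  have h : (n + 2 + 1) * (n + 2) = (n + 1) * n + (2 * n + 3) * 2 := by ring
  rw [h, Nat.add_mul_div_right _ _ (by norm_num : (0:ℕ) < 2)]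

/-- Summability of the basic series. -/
lemma summable_aux {q : ℂ} (hq : ‖q‖ < 1) (z : ℂ) :
    Summable (fun n : ℕ ↦ q ^ ((n + 1) * n / 2) * z ^ (n + 1)) := by
  apply summable_of_ratio_norm_eventually_le (r := 1 / 2) (by norm_num)
  have h0 : Tendsto (fun n : ℕ ↦ ‖q‖ ^ (n + 1) * ‖z‖) atTop (nhds 0) := by
    have := (tendsto_pow_atTop_nhds_zero_of_lt_one (norm_nonneg q) hq)
    have h1 : Tendsto (fun n : ℕ ↦ ‖q‖ ^ (n + 1)) atTop (nhds 0) :=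
      this.comp (tendsto_add_atTop_nat 1)
    simpa using h1.mul_const ‖z‖
  filter_upwards [h0.eventually (ge_mem_nhds (by norm_num : (0:ℝ) < 1 / 2))] with n hn
  have hkey : ‖q ^ ((n + 1 + 1) * (n + 1) / 2) * z ^ (n + 1 + 1)‖
      = (‖q‖ ^ (n + 1) * ‖z‖) * ‖q ^ ((n + 1) * n / 2) * z ^ (n + 1)‖ := by
    simp only [Texp1, pow_add, pow_succ, norm_mul, norm_pow]
    ring
  rw [hkey]
  exact mul_le_mul_of_nonneg_right hn (norm_nonneg _)

/-- Split `f₂` into its `a`-part and `b`-part. -/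
lemma f₂_eq {q : ℂ} (hq : ‖q‖ < 1) (b x : ℂ) :
    f₂ q b x = 1 + (∑' n : ℕ, q ^ ((n + 1) * n / 2) * (-x) ^ (n + 1))
      + (∑' n : ℕ, q ^ ((n + 1) * n / 2) * (-b) ^ (n + 1)) := by
  have hpt : ∀ n : ℕ, (-1 : ℂ) ^ (n + 1) * q ^ ((n + 1) * n / 2) * (x ^ (n + 1) + b ^ (n + 1))
      = q ^ ((n + 1) * n / 2) * (-x) ^ (n + 1) + q ^ ((n + 1) * n / 2) * (-b) ^ (n + 1) := by
    intro n
    rw [neg_pow, neg_pow]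
    ring
  unfold f₂
  rw [tsum_congr hpt, Summable.tsum_add (summable_aux hq (-x)) (summable_aux hq (-b)), add_assoc]

/-- Telescoping with step 1. -/
lemma tele1 {f : ℕ → ℂ} (hf : Summable f) : ∑' n : ℕ, (f n - f (n + 1)) = f 0 := by
  rw [Summable.tsum_sub hf ((summable_nat_add_iff 1).mpr hf), Summable.tsum_eq_zero_add hf]
  ring

/-- Telescoping with step 2. -/
lemma tele2 {f : ℕ → ℂ} (hf : Summable f) : ∑' n : ℕ, (f n - f (n + 2)) = f 0 + f 1 := by
  have h1 : Summable (fun n : ℕ ↦ f (n + 1)) := (summable_nat_add_iff 1).mpr hf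
  have h2 : Summable (fun n : ℕ ↦ f (n + 2)) := (summable_nat_add_iff 2).mpr hf
  rw [Summable.tsum_sub hf h2, Summable.tsum_eq_zero_add hf, Summable.tsum_eq_zero_add h1]
  have e : ∑' (n : ℕ), f (n + 1 + 1) = ∑' (n : ℕ), f (n + 2) := rfl
  rw [e]
  ring

/-- The inhomogeneous functional equation (2.11):
`(1+aq) f(a) - (1-a²q) f(aq) - (aq+a²q) f(aq²) = (q-1) a`. -/
theorem f_funcEq (q a b : ℂ) (hq : ‖q‖ < 1) :
    (1 + a * q) * f₂ q b a - (1 - a ^ 2 * q) * f₂ q b (a * q)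
      - (a * q + a ^ 2 * q) * f₂ q b (a * q ^ 2) = (q - 1) * a := by
  set u : ℕ → ℂ := fun n ↦ q ^ ((n + 1) * n / 2) * (-a) ^ (n + 1) with hu_def
  set u' : ℕ → ℂ := fun n ↦ q ^ ((n + 1) * n / 2) * (-(a * q)) ^ (n + 1) with hu'_def
  set u'' : ℕ → ℂ := fun n ↦ q ^ ((n + 1) * n / 2) * (-(a * q ^ 2)) ^ (n + 1) with hu''_def
  have hu : Summable u := summable_aux hq (-a)
  have hu' : Summable u' := summable_aux hq (-(a * q))
  have hu'' : Summable u'' := summable_aux hq (-(a * q ^ 2))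
  -- pointwise identity
  have hpt : ∀ n : ℕ, (1 + a * q) * u n - (1 - a ^ 2 * q) * u' n - (a * q + a ^ 2 * q) * u'' n
      = (u n - u (n + 2)) + (a * q * u n - a * q * u (n + 1)) - (u' n - u' (n + 1)) := by
    intro n
    simp only [hu_def, hu'_def, hu''_def]
    rw [Texp1 n, Texp2 n]
    have e1 : (-(a * q)) = (-a) * q := by ring
    have e2 : (-(a * q ^ 2)) = (-a) * q ^ 2 := by ring
    rw [e1, e2, mul_pow, mul_pow]
    have e3 : (q ^ 2) ^ (n + 1) = q ^ (n + 1) * q ^ (n + 1) := by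
      rw [← pow_mul, ← pow_add]; ring_nf
    rw [e3]
    have e4 : (2 * n + 3 : ℕ) = (n + 1) + (n + 2) := by omega
    rw [e4]
    simp only [pow_add, pow_succ]
    ring
  -- key identity
  have key : (1 + a * q) * (∑' n, u n) - (1 - a ^ 2 * q) * (∑' n, u' n)
      - (a * q + a ^ 2 * q) * (∑' n, u'' n) = (q - 1) * a := by
    rw [← tsum_mul_left (a := 1 + a * q), ← tsum_mul_left (a := 1 - a ^ 2 * q),
      ← tsum_mul_left (a := a * q + a ^ 2 * q),
      ← Summable.tsum_sub ((hu.mul_left _)) ((hu'.mul_left _)),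
      ← Summable.tsum_sub (((hu.mul_left _)).sub ((hu'.mul_left _))) ((hu''.mul_left _))]
    calc
      ∑' n, ((1 + a * q) * u n - (1 - a ^ 2 * q) * u' n - (a * q + a ^ 2 * q) * u'' n)
          = ∑' n, ((u n - u (n + 2)) + (a * q * u n - a * q * u (n + 1))
              - (u' n - u' (n + 1))) := tsum_congr hpt
      _ = (∑' n, (u n - u (n + 2))) + (∑' n, (a * q * u n - a * q * u (n + 1)))
              - (∑' n, (u' n - u' (n + 1))) := by
            have s1 : Summable (fun n : ℕ ↦ u n - u (n + 2)) :=
              hu.sub ((summable_nat_add_iff 2).mpr hu)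
            have s2 : Summable (fun n : ℕ ↦ a * q * u n - a * q * u (n + 1)) :=
              (hu.mul_left _).sub (((summable_nat_add_iff 1).mpr hu).mul_left _)
            have s3 : Summable (fun n : ℕ ↦ u' n - u' (n + 1)) :=
              hu'.sub ((summable_nat_add_iff 1).mpr hu')
            rw [← Summable.tsum_add s1 s2, ← Summable.tsum_sub (s1.add s2) s3]
      _ = (u 0 + u 1) + (a * q * u 0) - u' 0 := by
            rw [tele2 hu, tele1 (f := fun n ↦ a * q * u n) (hu.mul_left _),
              tele1 hu']
      _ = (q - 1) * a := by
            simp only [hu_def, hu'_def]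
            norm_num
            ring
  rw [f₂_eq hq b a, f₂_eq hq b (a * q), f₂_eq hq b (a * q ^ 2)]
  linear_combination key
end

section
/- Let q, a ∈ ℂ with |q| < 1, and suppose 1 + a q^n ≠ 0 for every integer n ≥ 1. Define a sequence (A_n)_{n≥0} by A_0 = (1 − a² q)/(1 + a q), A_1 = (1 − a² q³)(1 − a² q)/((1 + a q)(1 + a q²)) + (a q + a² q)/(1 + a q), and A_{n+1} = ((1 − a² q^{2n+3})/(1 + a q^{n+2}))·A_n + ((a q^{n+1} + a² q^{2n+1})/(1 + a q^{n+1}))·A_{n-1} for n ≥ 1. Then the sequence (A_n) converges (to a finite limit in ℂ). -/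
/-- Convergence of the coefficient sequence `A_n` defined by (2.16), arising from
iterating `H(a) = ((1-a²q)/(1+aq)) H(aq) + ((aq+a²q)/(1+aq)) H(aq²)`. -/
theorem A_seq_converges_two (q a : ℂ) (hq : ‖q‖ < 1)
    (hden : ∀ n : ℕ, 1 ≤ n → 1 + a * q ^ n ≠ 0) (A : ℕ → ℂ)
    (hA0 : A 0 = (1 - a ^ 2 * q) / (1 + a * q))
    (hA1 : A 1 = (1 - a ^ 2 * q ^ 3) * (1 - a ^ 2 * q) / ((1 + a * q) * (1 + a * q ^ 2))
      + (a * q + a ^ 2 * q) / (1 + a * q))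
    (hrec : ∀ n : ℕ, 1 ≤ n →
      A (n + 1) = ((1 - a ^ 2 * q ^ (2 * n + 3)) / (1 + a * q ^ (n + 2))) * A n
        + ((a * q ^ (n + 1) + a ^ 2 * q ^ (2 * n + 1)) / (1 + a * q ^ (n + 1))) * A (n - 1)) :
    ∃ L : ℂ, Filter.Tendsto A Filter.atTop (nhds L) := by
  classical
  set r : ℝ := ‖q‖ with hrdef
  have hr0 : 0 ≤ r := norm_nonneg q
  have hr1 : r < 1 := hq
  have ha0 : 0 ≤ ‖a‖ := norm_nonneg a
  -- eventually |a| r^n ≤ 1/2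
  obtain ⟨N, hN⟩ : ∃ N : ℕ, ∀ n, N ≤ n → ‖a‖ * r ^ n ≤ 1 / 2 := by
    have h := (tendsto_pow_atTop_nhds_zero_of_lt_one hr0 hr1).const_mul (‖a‖)
    rw [mul_zero] at h
    have h2 := h.eventually_lt_const (by norm_num : (0:ℝ) < 1/2)
    obtain ⟨N, hN⟩ := Filter.eventually_atTop.mp h2
    exact ⟨N, fun n hn => (hN n hn).le⟩
  -- uniform lower bound on denominators
  obtain ⟨δ, hδ0, hδ⟩ : ∃ δ : ℝ, 0 < δ ∧ ∀ n : ℕ, 1 ≤ n → δ ≤ ‖1 + a * q ^ n‖ := by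
    set T := insert ((1:ℝ)/2)
      ((Finset.Ico 1 N).image fun n => ‖1 + a * q ^ n‖) with hT
    have hTne : T.Nonempty := ⟨1/2, Finset.mem_insert_self _ _⟩
    refine ⟨T.min' hTne, ?_, ?_⟩
    · have hm := T.min'_mem hTne
      rcases Finset.mem_insert.mp hm with h | h
      · rw [h]; norm_num
      · obtain ⟨n, hn, hval⟩ := Finset.mem_image.mp h
        rw [← hval]
        exact norm_pos_iff.mpr (hden n (Finset.mem_Ico.mp hn).1)
    · intro n hn
      by_cases hcase : n < N
      · exact T.min'_le _ (Finset.mem_insert_of_mem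
          (Finset.mem_image_of_mem _ (Finset.mem_Ico.mpr ⟨hn, hcase⟩)))
      · have h1 : ‖a * q ^ n‖ ≤ 1/2 := by
          rw [norm_mul, norm_pow]; exact hN n (le_of_not_gt hcase)
        have h2 := norm_add_le (1 + a * q ^ n) (-(a * q ^ n))
        simp only [add_neg_cancel_right, norm_one, norm_neg, norm_neg] at h2
        have h3 : (1:ℝ)/2 ≤ ‖1 + a * q ^ n‖ := by linarith
        exact le_trans (T.min'_le _ (Finset.mem_insert_self _ _)) h3
  set C : ℝ := ‖a‖ * (1 + ‖a‖) / δ with hCdef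
  have hC0 : 0 ≤ C := by positivity
  -- bound on |c1 n - 1|
  have hc1 : ∀ n : ℕ, 1 ≤ n →
      ‖(1 - a ^ 2 * q ^ (2 * n + 3)) / (1 + a * q ^ (n + 2)) - 1‖ ≤ C * r ^ n := by
    intro n hn
    have hne : (1 + a * q ^ (n + 2)) ≠ 0 := hden (n + 2) (by omega)
    have hid : (1 - a ^ 2 * q ^ (2 * n + 3)) / (1 + a * q ^ (n + 2)) - 1
        = (-(a * q ^ (n + 2)) * (1 + a * q ^ (n + 1))) / (1 + a * q ^ (n + 2)) := by
      field_simp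
      ring
    rw [hid, norm_div, norm_mul, norm_neg, norm_mul, norm_pow]
    have hnum : ‖1 + a * q ^ (n + 1)‖ ≤ 1 + ‖a‖ * r ^ (n + 1) := by
      have := norm_add_le 1 (a * q ^ (n + 1))
      rwa [norm_one, norm_mul, norm_pow] at this
    have hden' : δ ≤ ‖1 + a * q ^ (n + 2)‖ := hδ (n + 2) (by omega)
    calc ‖a‖ * r ^ (n + 2) * ‖1 + a * q ^ (n + 1)‖
          / ‖1 + a * q ^ (n + 2)‖
        ≤ ‖a‖ * r ^ (n + 2) * (1 + ‖a‖ * r ^ (n + 1)) / δ := by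
          exact div_le_div₀ (by positivity)
            (mul_le_mul_of_nonneg_left hnum (by positivity)) hδ0 hden'
      _ ≤ ‖a‖ * r ^ n * (1 + ‖a‖ * 1) / δ := by
          have p1 : r ^ (n + 2) ≤ r ^ n := pow_le_pow_of_le_one hr0 hr1.le (by omega)
          have p2 : r ^ (n + 1) ≤ 1 := pow_le_one₀ hr0 hr1.le
          have pn2 : (0:ℝ) ≤ r ^ (n + 2) := by positivity
          have pn : (0:ℝ) ≤ r ^ n := by positivity
          have pn1 : (0:ℝ) ≤ r ^ (n + 1) := by positivity
          apply div_le_div₀ (by positivity) _ hδ0 le_rfl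
          nlinarith [mul_le_mul_of_nonneg_left p1 ha0,
            mul_le_mul_of_nonneg_left p2 (mul_nonneg (mul_nonneg ha0 ha0) pn2),
            mul_le_mul_of_nonneg_left p1 (mul_nonneg ha0 ha0)]
      _ = C * r ^ n := by rw [hCdef]; ring
  -- bound on |c2 n|
  have hc2 : ∀ n : ℕ, 1 ≤ n →
      ‖(a * q ^ (n + 1) + a ^ 2 * q ^ (2 * n + 1)) / (1 + a * q ^ (n + 1))‖
        ≤ C * r ^ n := by
    intro n hn
    have hden' : δ ≤ ‖1 + a * q ^ (n + 1)‖ := hδ (n + 1) (by omega)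
    rw [norm_div]
    have hnum : ‖a * q ^ (n + 1) + a ^ 2 * q ^ (2 * n + 1)‖
        ≤ ‖a‖ * r ^ (n + 1) + ‖a‖ ^ 2 * r ^ (2 * n + 1) := by
      have := norm_add_le (a * q ^ (n + 1)) (a ^ 2 * q ^ (2 * n + 1))
      rwa [norm_mul, norm_mul, norm_pow, norm_pow, norm_pow] at this
    calc ‖a * q ^ (n + 1) + a ^ 2 * q ^ (2 * n + 1)‖
          / ‖1 + a * q ^ (n + 1)‖
        ≤ (‖a‖ * r ^ (n + 1) + ‖a‖ ^ 2 * r ^ (2 * n + 1)) / δ := by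
          exact div_le_div₀ (by positivity) hnum hδ0 hden'
      _ ≤ (‖a‖ * r ^ n + ‖a‖ ^ 2 * r ^ n) / δ := by
          have p1 : r ^ (n + 1) ≤ r ^ n := pow_le_pow_of_le_one hr0 hr1.le (by omega)
          have p3 : r ^ (2 * n + 1) ≤ r ^ n := pow_le_pow_of_le_one hr0 hr1.le (by omega)
          apply div_le_div₀ (by positivity) _ hδ0 le_rfl
          have := mul_le_mul_of_nonneg_left p1 ha0
          have := mul_le_mul_of_nonneg_left p3 (mul_nonneg ha0 ha0)
          nlinarith
      _ = C * r ^ n := by rw [hCdef]; ring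
  -- boundedness
  set B0 : ℝ := max (‖A 0‖) (‖A 1‖) with hB0def
  have hB00 : 0 ≤ B0 := le_trans (norm_nonneg _) (le_max_left _ _)
  set S : ℕ → ℝ := fun n => ∑ k ∈ Finset.range n, r ^ (k + 1) with hSdef
  have hSmono : ∀ n, S n ≤ S (n + 1) := by
    intro n
    simp only [hSdef, Finset.sum_range_succ]
    have : 0 ≤ r ^ (n + 1) := by positivity
    linarith
  have hSle : ∀ n, S n ≤ 1 / (1 - r) := by
    intro n
    have h1 : S n ≤ ∑ k ∈ Finset.range n, r ^ k := by
      apply Finset.sum_le_sum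
      intro k _
      exact pow_le_pow_of_le_one hr0 hr1.le (by omega)
    have h2 : ∑ k ∈ Finset.range n, r ^ k ≤ ∑' k : ℕ, r ^ k :=
      Summable.sum_le_tsum _ (fun k _ => by positivity) (summable_geometric_of_lt_one hr0 hr1)
    rw [tsum_geometric_of_lt_one hr0 hr1] at h2
    rw [one_div]
    linarith
  have hbd : ∀ n, max (‖A n‖) (‖A (n + 1)‖)
      ≤ B0 * Real.exp (2 * C * S n) := by
    intro n
    induction n with
    | zero =>
      simp only [hSdef, Finset.range_zero, Finset.sum_empty, mul_zero, Real.exp_zero, mul_one]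
      exact le_refl _
    | succ n ih =>
      have hP0 : 0 ≤ B0 * Real.exp (2 * C * S n) := by positivity
      have hmono : B0 * Real.exp (2 * C * S n) ≤ B0 * Real.exp (2 * C * S (n + 1)) := by
        apply mul_le_mul_of_nonneg_left _ hB00
        exact Real.exp_le_exp.mpr (by nlinarith [hSmono n])
      have hAn1 : ‖A (n + 1)‖ ≤ B0 * Real.exp (2 * C * S n) :=
        le_trans (le_max_right _ _) ih
      have hAn : ‖A n‖ ≤ B0 * Real.exp (2 * C * S n) :=
        le_trans (le_max_left _ _) ih
      have hAn2 : ‖A (n + 2)‖ ≤ B0 * Real.exp (2 * C * S (n + 1)) := by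
        have hr' := hrec (n + 1) (by omega)
        simp only [Nat.add_sub_cancel] at hr'
        have habs : ‖A (n + 2)‖
            ≤ ‖(1 - a ^ 2 * q ^ (2 * (n + 1) + 3)) / (1 + a * q ^ (n + 1 + 2))‖
                * ‖A (n + 1)‖
              + ‖(a * q ^ (n + 1 + 1) + a ^ 2 * q ^ (2 * (n + 1) + 1))
                / (1 + a * q ^ (n + 1 + 1))‖ * ‖A n‖ := by
          rw [hr']
          exact le_trans (norm_add_le _ _) (by rw [norm_mul, norm_mul])
        have hc1' : ‖(1 - a ^ 2 * q ^ (2 * (n + 1) + 3)) / (1 + a * q ^ (n + 1 + 2))‖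
            ≤ 1 + C * r ^ (n + 1) := by
          have h := hc1 (n + 1) (by omega)
          have htri := norm_add_le
            ((1 - a ^ 2 * q ^ (2 * (n + 1) + 3)) / (1 + a * q ^ (n + 1 + 2)) - 1) 1
          rw [sub_add_cancel, norm_one] at htri
          linarith
        have hc2' := hc2 (n + 1) (by omega)
        have hrn : (0:ℝ) ≤ r ^ (n + 1) := by positivity
        have key : ‖A (n + 2)‖
            ≤ (1 + 2 * C * r ^ (n + 1)) * (B0 * Real.exp (2 * C * S n)) := by
          calc ‖A (n + 2)‖
              ≤ (1 + C * r ^ (n + 1)) * (B0 * Real.exp (2 * C * S n))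
                + (C * r ^ (n + 1)) * (B0 * Real.exp (2 * C * S n)) := by
                refine le_trans habs ?_
                exact add_le_add
                  (mul_le_mul hc1' hAn1 (norm_nonneg _) (by positivity))
                  (mul_le_mul hc2' hAn (norm_nonneg _) (by positivity))
            _ = (1 + 2 * C * r ^ (n + 1)) * (B0 * Real.exp (2 * C * S n)) := by ring
        have hexp : 1 + 2 * C * r ^ (n + 1) ≤ Real.exp (2 * C * r ^ (n + 1)) := by
          have := Real.add_one_le_exp (2 * C * r ^ (n + 1))
          linarith
        calc ‖A (n + 2)‖
            ≤ (1 + 2 * C * r ^ (n + 1)) * (B0 * Real.exp (2 * C * S n)) := key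
          _ ≤ Real.exp (2 * C * r ^ (n + 1)) * (B0 * Real.exp (2 * C * S n)) := by
              gcongr
          _ = B0 * Real.exp (2 * C * S (n + 1)) := by
              have hE : Real.exp (2 * C * r ^ (n + 1)) * Real.exp (2 * C * S n)
                  = Real.exp (2 * C * S (n + 1)) := by
                rw [← Real.exp_add]
                congr 1
                simp only [hSdef, Finset.sum_range_succ]
                ring
              rw [← hE]
              ring
        -- end
      exact max_le (le_trans hAn1 hmono) hAn2
  set M : ℝ := B0 * Real.exp (2 * C * (1 / (1 - r))) with hMdef
  have hM0 : 0 ≤ M := by positivity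
  have hM : ∀ n, ‖A n‖ ≤ M := by
    intro n
    have h1 : ‖A n‖ ≤ B0 * Real.exp (2 * C * S n) :=
      le_trans (le_max_left _ _) (hbd n)
    refine le_trans h1 ?_
    apply mul_le_mul_of_nonneg_left _ hB00
    exact Real.exp_le_exp.mpr (by nlinarith [hSle n])
  -- difference bound
  have hdiff : ∀ n : ℕ, 1 ≤ n → ‖A (n + 1) - A n‖ ≤ 2 * C * M * r ^ n := by
    intro n hn
    have hr' := hrec n hn
    have hid : A (n + 1) - A n
        = ((1 - a ^ 2 * q ^ (2 * n + 3)) / (1 + a * q ^ (n + 2)) - 1) * A n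
          + ((a * q ^ (n + 1) + a ^ 2 * q ^ (2 * n + 1)) / (1 + a * q ^ (n + 1))) * A (n - 1) := by
      rw [hr']; ring
    rw [hid]
    refine le_trans (norm_add_le _ _) ?_
    rw [norm_mul, norm_mul]
    have b1 := mul_le_mul (hc1 n hn) (hM n) (norm_nonneg _) (by positivity)
    have b2 := mul_le_mul (hc2 n hn) (hM (n - 1)) (norm_nonneg _) (by positivity)
    have hrn : (0:ℝ) ≤ r ^ n := by positivity
    nlinarith
  -- Cauchy
  set K : ℝ := 2 * C * M + dist (A 0) (A 1) with hKdef
  have hK0 : 0 ≤ 2 * C * M := by positivity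
  have hcauchy : CauchySeq A := by
    apply cauchySeq_of_dist_le_of_summable (fun n => K * r ^ n)
    · intro n
      rcases Nat.eq_zero_or_pos n with h0 | h1
      · subst h0
        simp only [pow_zero, mul_one, hKdef]
        linarith [dist_nonneg (x := A 0) (y := A 1)]
      · have := hdiff n h1
        rw [Complex.dist_eq]
        have heq : ‖A n - A (n + 1)‖ = ‖A (n + 1) - A n‖ := by
          rw [← norm_neg]; ring_nf
        rw [show (n.succ : ℕ) = n + 1 from rfl, heq]
        have hrn : (0:ℝ) ≤ r ^ n := by positivity
        have hd0 : 0 ≤ dist (A 0) (A 1) := dist_nonneg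
        calc ‖A (n + 1) - A n‖ ≤ 2 * C * M * r ^ n := this
          _ ≤ K * r ^ n := by rw [hKdef]; nlinarith
    · exact (summable_geometric_of_lt_one hr0 hr1).mul_left K
  exact cauchySeq_tendsto_of_complete hcauchy
end
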